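/- Local complementation preserves linear rank-width: if H = G * x is obtained from G by local complementation at a vertex x, then lrw(H) = lrw(G). -/

import Mathlib

open scoped Classical

variable {V : Type*} [Fintype V] [DecidableEq V]

/-- GF(2)-rank of the adjacency submatrix `A_G[X, V \ X]`. -/
noncomputable def cutrk (G : SimpleGraph V) (X : Finset V) : ℕ :=
  (Matrix.of fun (a : X) (b : (Xᶜ : Finset V)) =>
    if G.Adj a.1 b.1 then (1 : ZMod 2) else 0).rank

/-- The cutrank of a linear ordering of the vertices. -/
noncomputable def ordCutrk (G : SimpleGraph V) (e : Fin (Fintype.card V) ≃ V) : ℕ :=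
  Finset.univ.sup fun i : Fin (Fintype.card V) => cutrk G ((Finset.Iic i).image e)

/-- Linear rank-width: minimum cutrank over all linear orderings of the vertices. -/
noncomputable def lrw (G : SimpleGraph V) : ℕ :=
  ⨅ e : Fin (Fintype.card V) ≃ V, ordCutrk G e

/-- Local complementation at a vertex `x`: toggle all edges among the neighbours of `x`. -/
def localComplement (G : SimpleGraph V) (x : V) : SimpleGraph V where
  Adj a b :=
    (G.Adj a b ∧ ¬(G.Adj x a ∧ G.Adj x b)) ∨
    (¬ G.Adj a b ∧ a ≠ b ∧ G.Adj x a ∧ G.Adj x b)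
  symm := by
    constructor
    intro a b h
    rcases h with ⟨hab, hn⟩ | ⟨hn, hne, hxa, hxb⟩
    · exact Or.inl ⟨hab.symm, fun h => hn ⟨h.2, h.1⟩⟩
    · exact Or.inr ⟨fun h => hn h.symm, hne.symm, hxb, hxa⟩
  loopless := by
    constructor
    intro a h
    rcases h with ⟨hab, _⟩ | ⟨_, hne, _⟩
    · exact G.loopless.irrefl a hab
    · exact hne rfl

lemma entry_lc (G : SimpleGraph V) (x a b : V) (hab : a ≠ b) :
    (if (localComplement G x).Adj a b then (1 : ZMod 2) else 0) =
    (if G.Adj a b then (1 : ZMod 2) else 0) +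
      (if G.Adj x a then (1 : ZMod 2) else 0) * (if G.Adj x b then (1 : ZMod 2) else 0) := by
  by_cases h1 : G.Adj a b <;> by_cases h2 : G.Adj x a <;> by_cases h3 : G.Adj x b <;>
    simp [localComplement, h1, h2, h3, hab] <;> decide

lemma cutrk_lc (G : SimpleGraph V) (x : V) (X : Finset V) :
    cutrk (localComplement G x) X = cutrk G X := by
  classical
  set M : Matrix X (Xᶜ : Finset V) (ZMod 2) :=
    Matrix.of fun a b => if G.Adj a.1 b.1 then 1 else 0 with hM
  have hab : ∀ (a : X) (b : (Xᶜ : Finset V)), a.1 ≠ b.1 := by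
    intro a b h
    exact (Finset.mem_compl.mp b.2) (h ▸ a.2)
  by_cases hx : x ∈ X
  · set x' : X := ⟨x, hx⟩ with hx'
    set N : Matrix X X (ZMod 2) :=
      Matrix.of (fun a c =>
        if c = x' then (if G.Adj x a.1 then (1 : ZMod 2) else 0) else 0) with hN
    set P : Matrix X X (ZMod 2) := 1 + N with hP
    have hNN : N * N = 0 := by
      ext a k
      simp only [Matrix.mul_apply, hN, Matrix.of_apply, ite_mul, zero_mul,
        Finset.sum_ite_eq', Finset.mem_univ, if_true, Matrix.zero_apply]
      simp [hx', G.loopless.irrefl x]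
    have hPP : P * P = 1 := by
      rw [hP, add_mul, mul_add, mul_add, one_mul, mul_one, hNN]
      have : N + N = 0 := by
        ext a k; simpa using (CharTwo.add_self_eq_zero (N a k))
      rw [add_zero, one_mul, add_assoc, this, add_zero]
    have hdet : IsUnit P.det :=
      IsUnit.of_mul_eq_one _ (by rw [← Matrix.det_mul, hPP, Matrix.det_one])
    have hPM : (Matrix.of fun (a : X) (b : (Xᶜ : Finset V)) =>
        if (localComplement G x).Adj a.1 b.1 then (1 : ZMod 2) else 0) = P * M := by
      ext a b
      rw [Matrix.of_apply, entry_lc G x a.1 b.1 (hab a b)]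
      rw [hP, Matrix.add_mul, Matrix.one_mul]
      simp only [Matrix.add_apply, Matrix.mul_apply, hN, hM, Matrix.of_apply, ite_mul, zero_mul,
        Finset.sum_ite_eq', Finset.mem_univ, if_true]
      rfl
    unfold cutrk
    rw [hPM, Matrix.rank_mul_eq_right_of_isUnit_det P M hdet]
  · have hx2 : x ∈ (Xᶜ : Finset V) := Finset.mem_compl.mpr hx
    set x' : (Xᶜ : Finset V) := ⟨x, hx2⟩ with hx'
    set N : Matrix (Xᶜ : Finset V) (Xᶜ : Finset V) (ZMod 2) :=
      Matrix.of (fun c b =>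
        if c = x' then (if G.Adj x b.1 then (1 : ZMod 2) else 0) else 0) with hN
    set Q : Matrix (Xᶜ : Finset V) (Xᶜ : Finset V) (ZMod 2) := 1 + N with hQ
    have hNN : N * N = 0 := by
      ext a k
      simp only [Matrix.mul_apply, hN, Matrix.of_apply, mul_ite, mul_zero, ite_mul, zero_mul,
        Finset.sum_ite_eq', Finset.mem_univ, if_true, Matrix.zero_apply]
      simp [hx', G.loopless.irrefl x]
    have hPP : Q * Q = 1 := by
      rw [hQ, add_mul, mul_add, mul_add, one_mul, mul_one, hNN]
      have : N + N = 0 := by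
        ext a k; simpa using (CharTwo.add_self_eq_zero (N a k))
      rw [add_zero, one_mul, add_assoc, this, add_zero]
    have hdet : IsUnit Q.det :=
      IsUnit.of_mul_eq_one _ (by rw [← Matrix.det_mul, hPP, Matrix.det_one])
    have hMQ : (Matrix.of fun (a : X) (b : (Xᶜ : Finset V)) =>
        if (localComplement G x).Adj a.1 b.1 then (1 : ZMod 2) else 0) = M * Q := by
      ext a b
      rw [Matrix.of_apply, entry_lc G x a.1 b.1 (hab a b)]
      rw [hQ, Matrix.mul_add, Matrix.mul_one]
      simp only [Matrix.add_apply, Matrix.mul_apply, hN, hM, Matrix.of_apply, mul_ite, mul_zero,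
        Finset.sum_ite_eq', Finset.mem_univ, if_true]
      rw [G.adj_comm x a.1]
    unfold cutrk
    rw [hMQ, Matrix.rank_mul_eq_left_of_isUnit_det Q M hdet]

theorem stmt3 (G : SimpleGraph V) (x : V) :
    lrw (localComplement G x) = lrw G := by
  simp only [lrw, ordCutrk, cutrk_lc]
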